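/- Let (z^m)_{m ≥ 1} be a sequence of real numbers converging to z ∈ ℝ, and (u^m)_{m ≥ 1} a sequence in L²(n) converging to u in L²(n) such that |u^m(x)| ≤ M for n-a.e. x and all m (so that also |u(x)| ≤ M n-a.e.). Then f^m(z^m, u^m) → f(z, u) as m → ∞. -/

import Mathlib

open MeasureTheory
open Filter

/-- `g α y = (exp(α y) − α y − 1)/α`. -/
noncomputable def g (α y : ℝ) : ℝ := (Real.exp (α * y) - α * y - 1) / α

lemma g_zero (α : ℝ) : g α 0 = 0 := by simp [g]

lemma g_nonneg {α : ℝ} (hα : 0 < α) (y : ℝ) : 0 ≤ g α y := by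
  have h := Real.add_one_le_exp (α * y)
  have h2 : (0:ℝ) ≤ Real.exp (α*y) - α*y - 1 := by linarith
  exact div_nonneg h2 hα.le

lemma g_continuous (α : ℝ) : Continuous (g α) := by
  unfold g; fun_prop

lemma g_hasDerivAt (α y : ℝ) :
    HasDerivAt (g α) ((Real.exp (α * y) * α - α) / α) y := by
  have h1 : HasDerivAt (fun t : ℝ => α * t) α y := by
    simpa using (hasDerivAt_id y).const_mul α
  have h2 : HasDerivAt (fun t : ℝ => Real.exp (α * t)) (Real.exp (α * y) * α) y := h1.exp
  exact ((h2.sub h1).sub_const 1).div_const α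

lemma abs_exp_sub_one_le (x : ℝ) : |Real.exp x - 1| ≤ |x| * Real.exp |x| := by
  have h1 : (1:ℝ) - x ≤ (Real.exp x)⁻¹ := by
    have := Real.add_one_le_exp (-x); rw [Real.exp_neg] at this; linarith
  have hp := Real.exp_pos x
  have h0 : x + 1 ≤ Real.exp x := Real.add_one_le_exp x
  rcases le_or_gt 0 x with hx | hx
  · rw [abs_of_nonneg (by linarith : (0:ℝ) ≤ Real.exp x - 1), abs_of_nonneg hx]
    have h2 : (1 - x) * Real.exp x ≤ 1 := by
      have := mul_le_mul_of_nonneg_right h1 hp.le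
      rwa [inv_mul_cancel₀ hp.ne'] at this
    nlinarith
  · rw [abs_of_nonpos (by linarith [Real.exp_le_one_iff.2 hx.le] : Real.exp x - 1 ≤ 0),
      abs_of_neg hx]
    have he : (1:ℝ) ≤ Real.exp (-x) := Real.one_le_exp (by linarith)
    nlinarith [mul_nonneg (by linarith : (0:ℝ) ≤ -x) (by linarith : (0:ℝ) ≤ Real.exp (-x) - 1)]

lemma g_diff {α R : ℝ} (hα : 0 < α) {a b : ℝ} (ha : |a| ≤ R) (hb : |b| ≤ R) :
    |g α a - g α b| ≤ α * Real.exp (α * R) * ((|a| + |b|) * |a - b|) := by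
  have hmaxR : max |a| |b| ≤ R := max_le ha hb
  have key : ∀ y ∈ Set.uIcc b a, ‖Real.exp (α * y) - 1‖ ≤
      α * Real.exp (α * R) * max |a| |b| := by
    intro y hy
    have hyb : |y| ≤ max |a| |b| := by
      rw [Set.uIcc_eq_union] at hy
      rcases hy with hy | hy <;> rw [Set.mem_Icc] at hy <;>
        [skip; skip] <;> rw [abs_le] <;>
        constructor <;>
        nlinarith [neg_abs_le a, le_abs_self a, neg_abs_le b, le_abs_self b,
          le_max_left |a| |b|, le_max_right |a| |b|]
    have h1 : |Real.exp (α*y) - 1| ≤ |α*y| * Real.exp |α*y| := abs_exp_sub_one_le _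
    have h2 : |α * y| = α * |y| := by rw [abs_mul, abs_of_pos hα]
    have h3 : Real.exp |α * y| ≤ Real.exp (α * R) := by
      apply Real.exp_le_exp.2
      rw [h2]
      have : |y| ≤ R := le_trans hyb hmaxR
      nlinarith
    calc ‖Real.exp (α * y) - 1‖ ≤ (α * |y|) * Real.exp |α * y| := by rw [← h2]; exact h1
      _ ≤ (α * max |a| |b|) * Real.exp (α * R) := by
          apply mul_le_mul (by nlinarith) h3 (Real.exp_pos _).le (by positivity)
      _ = α * Real.exp (α * R) * max |a| |b| := by ring
  have hder : ∀ y ∈ Set.uIcc b a,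
      HasDerivWithinAt (g α) (Real.exp (α * y) - 1) (Set.uIcc b a) y := by
    intro y _
    have := (g_hasDerivAt α y).hasDerivWithinAt (s := Set.uIcc b a)
    exact this.congr_deriv (by rw [sub_div, mul_div_assoc, div_self hα.ne', mul_one])
  have := (convex_uIcc b a).norm_image_sub_le_of_norm_hasDerivWithin_le hder key
    Set.left_mem_uIcc Set.right_mem_uIcc
  calc |g α a - g α b| ≤ α * Real.exp (α * R) * max |a| |b| * ‖a - b‖ := this
    _ ≤ α * Real.exp (α * R) * ((|a| + |b|) * |a - b|) := by
        have h4 : max |a| |b| ≤ |a| + |b| :=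
          max_le (le_add_of_nonneg_right (abs_nonneg b)) (le_add_of_nonneg_left (abs_nonneg a))
        have h5 : (0:ℝ) ≤ α * Real.exp (α * R) := by positivity
        rw [Real.norm_eq_abs]
        nlinarith [mul_le_mul_of_nonneg_left (mul_le_mul_of_nonneg_right h4 (abs_nonneg (a-b))) h5]

lemma g_quad {α R : ℝ} (hα : 0 < α) {a : ℝ} (ha : |a| ≤ R) :
    g α a ≤ α * Real.exp (α * R) * a ^ 2 := by
  have h := g_diff hα ha (le_trans (by simp) ha : |(0:ℝ)| ≤ R)
  rw [g_zero] at h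
  have := le_of_abs_le h
  calc g α a = g α a - 0 := by ring
    _ ≤ α * Real.exp (α * R) * ((|a| + |0|) * |a - 0|) := this
    _ = α * Real.exp (α * R) * a ^ 2 := by simp [sq_abs, ← sq]

lemma sInf_image_diff_le {φ ψ : ℝ → ℝ} {s : Set ℝ} (hs : s.Nonempty)
    (hφ : ∀ p ∈ s, 0 ≤ φ p) (hψ : ∀ p ∈ s, 0 ≤ ψ p)
    {δ : ℝ} (h : ∀ p ∈ s, |φ p - ψ p| ≤ δ) :
    |sInf (φ '' s) - sInf (ψ '' s)| ≤ δ := by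
  have bφ : BddBelow (φ '' s) := by
    refine ⟨0, ?_⟩; rintro y ⟨p, hp, rfl⟩; exact hφ p hp
  have bψ : BddBelow (ψ '' s) := by
    refine ⟨0, ?_⟩; rintro y ⟨p, hp, rfl⟩; exact hψ p hp
  rw [abs_le]
  constructor
  · have h1 : sInf (ψ '' s) - δ ≤ sInf (φ '' s) := by
      apply le_csInf (hs.image φ)
      rintro y ⟨p, hp, rfl⟩
      have h2 := csInf_le bψ (Set.mem_image_of_mem ψ hp)
      have h3 := (abs_le.1 (h p hp)).1
      linarith
    linarith
  · have h1 : sInf (φ '' s) - δ ≤ sInf (ψ '' s) := by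
      apply le_csInf (hs.image ψ)
      rintro y ⟨p, hp, rfl⟩
      have h2 := csInf_le bφ (Set.mem_image_of_mem φ hp)
      have h3 := (abs_le.1 (h p hp)).2
      linarith
    linarith

lemma tail_tendsto {n : Measure ℝ} (hn0 : n {0} = 0) {h : ℝ → ℝ}
    (hh : Integrable h n) :
    Tendsto (fun m : ℕ => ∫ x in {x : ℝ | 1/(m:ℝ) ≤ |x|}ᶜ, h x ∂n) atTop (nhds 0) := by
  have hmeas : ∀ m : ℕ, MeasurableSet ({x : ℝ | 1/(m:ℝ) ≤ |x|}ᶜ) := fun m =>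
    ((isClosed_le continuous_const continuous_abs).measurableSet).compl
  have heq : ∀ m : ℕ, ∫ x in {x : ℝ | 1/(m:ℝ) ≤ |x|}ᶜ, h x ∂n
      = ∫ x, Set.indicator {x : ℝ | 1/(m:ℝ) ≤ |x|}ᶜ h x ∂n := fun m =>
    (integral_indicator (hmeas m)).symm
  simp only [heq]
  have h0 : (0:ℝ) = ∫ x, (0:ℝ) ∂n := by simp
  rw [h0]
  apply tendsto_integral_of_dominated_convergence (fun x => |h x|)
  · intro m
    exact (hh.aestronglyMeasurable.indicator (hmeas m))
  · exact hh.abs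
  · intro m
    filter_upwards with x
    rw [Real.norm_eq_abs]
    rcases Set.indicator_eq_zero_or_self _ h x with he | he <;> rw [he] <;> simp [abs_nonneg]
  · have hne : ∀ᵐ x ∂n, x ≠ 0 := by
      rw [ae_iff]; simpa using hn0
    filter_upwards [hne] with x hx
    have hx0 : 0 < |x| := abs_pos.2 hx
    have hev : ∀ᶠ m : ℕ in atTop, Set.indicator {x : ℝ | 1/(m:ℝ) ≤ |x|}ᶜ h x = 0 := by
      have := tendsto_one_div_atTop_nhds_zero_nat.eventually_lt_const hx0
      filter_upwards [this] with m hm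
      apply Set.indicator_of_notMem
      simp only [Set.mem_compl_iff, Set.mem_setOf_eq, not_not, not_le, not_lt]
      exact hm.le
    exact Tendsto.congr' (Filter.EventuallyEq.symm hev) tendsto_const_nhds

lemma integrable_sq_sub {n : Measure ℝ} {v w : ℝ → ℝ} (hv : Measurable v)
    (hw : Measurable w) (hv2 : Integrable (fun x => v x ^ 2) n)
    (hw2 : Integrable (fun x => w x ^ 2) n) :
    Integrable (fun x => (v x - w x) ^ 2) n := by
  apply Integrable.mono' (((hv2.add hw2).const_mul 2))
    (((hv.sub hw).pow_const 2).aestronglyMeasurable)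
  filter_upwards with x
  rw [Real.norm_eq_abs, abs_of_nonneg (sq_nonneg _)]
  simp only [Pi.add_apply, Pi.sub_apply]
  nlinarith [sq_nonneg (v x + w x)]

lemma ae_abs_le_of_L2 {n : Measure ℝ} {us : ℕ → ℝ → ℝ} {u : ℝ → ℝ} {M : ℝ}
    (hum : Measurable u)
    (husb : ∀ m, ∀ᵐ x ∂n, |us m x| ≤ M)
    (hint : ∀ m, Integrable (fun x => (us m x - u x) ^ 2) n)
    (husu : Tendsto (fun m : ℕ => ∫ x, (us m x - u x) ^ 2 ∂n) atTop (nhds 0)) :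
    ∀ᵐ x ∂n, |u x| ≤ M := by
  have key : ∀ δ : ℝ, 0 < δ → n {x | M + δ ≤ |u x|} = 0 := by
    intro δ hδ
    set E := {x : ℝ | M + δ ≤ |u x|} with hE_def
    have hE : MeasurableSet E := measurableSet_le measurable_const hum.abs
    have hle : ∀ m : ℕ, ENNReal.ofReal (δ ^ 2) * n E
        ≤ ENNReal.ofReal (∫ x, (us m x - u x) ^ 2 ∂n) := by
      intro m
      have hsub : ∀ᵐ x ∂(n.restrict E),
          ENNReal.ofReal (δ ^ 2) ≤ ENNReal.ofReal ((us m x - u x) ^ 2) := by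
        rw [ae_restrict_iff' hE]
        filter_upwards [husb m] with x hx hxE
        apply ENNReal.ofReal_le_ofReal
        have h1 : M + δ ≤ |u x| := hxE
        have h2 : δ ≤ |us m x - u x| := by
          have h3 := abs_sub_abs_le_abs_sub (u x) (us m x)
          rw [abs_sub_comm (u x)] at h3
          linarith
        nlinarith [sq_abs (us m x - u x), abs_nonneg (us m x - u x)]
      calc ENNReal.ofReal (δ ^ 2) * n E
          = ∫⁻ _ in E, ENNReal.ofReal (δ ^ 2) ∂n := (setLIntegral_const E _).symm
        _ ≤ ∫⁻ x in E, ENNReal.ofReal ((us m x - u x) ^ 2) ∂n := lintegral_mono_ae hsub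
        _ ≤ ∫⁻ x, ENNReal.ofReal ((us m x - u x) ^ 2) ∂n := setLIntegral_le_lintegral _ _
        _ = ENNReal.ofReal (∫ x, (us m x - u x) ^ 2 ∂n) :=
            (ofReal_integral_eq_lintegral_ofReal (hint m)
              (ae_of_all _ fun x => sq_nonneg _)).symm
    have htend : Tendsto (fun m : ℕ => ENNReal.ofReal (∫ x, (us m x - u x) ^ 2 ∂n))
        atTop (nhds 0) := by
      rw [← ENNReal.ofReal_zero]
      exact (ENNReal.continuous_ofReal.tendsto 0).comp husu
    have hle0 : ENNReal.ofReal (δ ^ 2) * n E ≤ 0 := ge_of_tendsto' htend hle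
    have h3 : ENNReal.ofReal (δ ^ 2) * n E = 0 := le_antisymm hle0 zero_le
    rcases mul_eq_zero.1 h3 with h | h
    · exact absurd h (ENNReal.ofReal_pos.2 (by positivity)).ne'
    · exact h
  have hU : n {x : ℝ | M < |u x|} = 0 := by
    have hsub : {x : ℝ | M < |u x|} ⊆ ⋃ k : ℕ, {x : ℝ | M + 1/((k:ℝ)+1) ≤ |u x|} := by
      intro x hx
      rcases exists_nat_one_div_lt (K := ℝ) (sub_pos.2 hx) with ⟨k, hk⟩
      exact Set.mem_iUnion.2 ⟨k, by simp only [Set.mem_setOf_eq]; push_cast at hk ⊢; linarith⟩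
    exact measure_mono_null hsub (measure_iUnion_null fun k => key _ (by positivity))
  rw [ae_iff]; simpa [not_le] using hU

lemma q_sq_le_ax (C a b c : ℝ) (hC : 0 ≤ C) :
    (|a| + |b| + 2*C*|c|)^2 ≤ 6*(a-b)^2 + (9*b^2 + 12*C^2*c^2) := by
  have e0 : ∀ A B Cc : ℝ, (A + B + Cc)^2 ≤ 3*A^2 + 3*B^2 + 3*Cc^2 := by
    intro A B Cc
    nlinarith [sq_nonneg (A-B), sq_nonneg (A-Cc), sq_nonneg (B-Cc)]
  have e1 := e0 |a| |b| (2*C*|c|)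
  have e2 : (2*C*|c|)^2 = 4*C^2*c^2 := by
    rw [mul_pow, mul_pow, sq_abs]
    ring
  rw [sq_abs, sq_abs, e2] at e1
  have e3 : a^2 ≤ 2*(a-b)^2 + 2*b^2 := by nlinarith [sq_nonneg (a - 2*b)]
  linarith

lemma young_div {e a b : ℝ} (he : 0 < e) : a * b ≤ e * a^2 + (1/(4*e)) * b^2 := by
  have key : e*a^2 + (1/(4*e))*b^2 - a*b = (1/(4*e))*(2*e*a - b)^2 := by
    field_simp
    ring
  nlinarith [mul_nonneg (by positivity : (0:ℝ) ≤ 1/(4*e)) (sq_nonneg (2*e*a - b))]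

/-- `u ∈ L²(n) ∩ L^∞(n)`: measurable, square integrable and essentially bounded. -/
def MemL2Linf (n : Measure ℝ) (u : ℝ → ℝ) : Prop :=
  Measurable u ∧ Integrable (fun x => (u x) ^ 2) n ∧ ∃ K : ℝ, ∀ᵐ x ∂n, |u x| ≤ K

/-- The generator
`f(z,u) = inf_{π ∈ 𝒞} [ (α/2)(πσ − (z + θ/α))² + ∫ g_α(u(x) − πβ(x)) dn(x) ] − θz − θ²/(2α)`. -/
noncomputable def gen (α θ σ : ℝ) (β : ℝ → ℝ) (𝒞 : Set ℝ) (n : Measure ℝ)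
    (z : ℝ) (u : ℝ → ℝ) : ℝ :=
  sInf ((fun π => α / 2 * (π * σ - (z + θ / α)) ^ 2
      + ∫ x, g α (u x - π * β x) ∂n) '' 𝒞) - θ * z - θ ^ 2 / (2 * α)

/-- The truncated generator
`f^m(z,u) = inf_{π ∈ 𝒞} [ (α/2)(πσ − (z+θ/α))²·ρ_m(z)
  + ∫_{|x| ≥ 1/m} g_α(u(x) − πβ(x))·ρ_M(u(x)) dn(x) ] − θz − θ²/(2α)`. -/
noncomputable def genT (α θ σ : ℝ) (β : ℝ → ℝ) (𝒞 : Set ℝ) (n : Measure ℝ)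
    (ρ : ℕ → ℝ → ℝ) (ρM : ℝ → ℝ) (m : ℕ) (z : ℝ) (u : ℝ → ℝ) : ℝ :=
  sInf ((fun π => α / 2 * (π * σ - (z + θ / α)) ^ 2 * ρ m z
      + ∫ x in {x : ℝ | 1 / (m : ℝ) ≤ |x|}, g α (u x - π * β x) * ρM (u x) ∂n) '' 𝒞)
    - θ * z - θ ^ 2 / (2 * α)

set_option maxHeartbeats 2000000 in
theorem stmt15 (α θ σ M : ℝ) (hα : 0 < α) (hM : 0 < M)
    (n : Measure ℝ) [SigmaFinite n] (hn0 : n {0} = 0)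
    (β : ℝ → ℝ) (hβ : MemL2Linf n β)
    (𝒞 : Set ℝ) (h𝒞c : IsCompact 𝒞) (h𝒞ne : 𝒞.Nonempty) (h𝒞0 : (0:ℝ) ∈ 𝒞)
    (ρ : ℕ → ℝ → ℝ)
    (hρc : ∀ m : ℕ, 1 ≤ m → Continuous (ρ m))
    (hρ01 : ∀ m : ℕ, 1 ≤ m → ∀ z : ℝ, ρ m z ∈ Set.Icc (0:ℝ) 1)
    (hρone : ∀ m : ℕ, 1 ≤ m → ∀ z : ℝ, |z| ≤ (m : ℝ) → ρ m z = 1)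
    (hρzero : ∀ m : ℕ, 1 ≤ m → ∀ z : ℝ, (m : ℝ) + 1 ≤ |z| → ρ m z = 0)
    (hρmono : ∀ m : ℕ, 1 ≤ m → ∀ z : ℝ, ρ m z ≤ ρ (m + 1) z)
    (ρM : ℝ → ℝ) (hρMc : Continuous ρM)
    (hρM01 : ∀ y : ℝ, ρM y ∈ Set.Icc (0:ℝ) 1)
    (hρMone : ∀ y : ℝ, |y| ≤ M → ρM y = 1)
    (zs : ℕ → ℝ) (z : ℝ) (hz : Filter.Tendsto zs Filter.atTop (nhds z))
    (us : ℕ → ℝ → ℝ) (u : ℝ → ℝ)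
    (husm : ∀ m : ℕ, Measurable (us m))
    (hus2 : ∀ m : ℕ, Integrable (fun x => (us m x) ^ 2) n)
    (husb : ∀ m : ℕ, ∀ᵐ x ∂n, |us m x| ≤ M)
    (hum : Measurable u) (hu2 : Integrable (fun x => (u x) ^ 2) n)
    (husu : Filter.Tendsto (fun m : ℕ => ∫ x, (us m x - u x) ^ 2 ∂n)
      Filter.atTop (nhds 0)) :
    Filter.Tendsto (fun m : ℕ => genT α θ σ β 𝒞 n ρ ρM m (zs m) (us m))
      Filter.atTop (nhds (gen α θ σ β 𝒞 n z u)) := by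
  classical
  obtain ⟨hβm, hβ2, Kβ0, hβb0⟩ := hβ
  set Kβ : ℝ := max Kβ0 0 with hKβ_def
  have hKβ : 0 ≤ Kβ := le_max_right _ _
  have hβb : ∀ᵐ x ∂n, |β x| ≤ Kβ := hβb0.mono fun x hx => hx.trans (le_max_left _ _)
  obtain ⟨C0, hC0⟩ := (isBounded_iff_forall_norm_le).1 h𝒞c.isBounded
  set C : ℝ := max C0 0 with hC_def
  have hCnn : 0 ≤ C := le_max_right _ _
  have hπC : ∀ π ∈ 𝒞, |π| ≤ C := fun π hπ =>
    (by simpa [Real.norm_eq_abs] using hC0 π hπ : |π| ≤ C0).trans (le_max_left _ _)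
  set R : ℝ := M + C * Kβ with hR_def
  set L : ℝ := α * Real.exp (α * R) with hL_def
  have hL : 0 < L := by positivity
  have hdm2 : ∀ m, Integrable (fun x => (us m x - u x) ^ 2) n := fun m =>
    integrable_sq_sub (husm m) hum (hus2 m) hu2
  have hub : ∀ᵐ x ∂n, |u x| ≤ M := ae_abs_le_of_L2 hum husb hdm2 husu
  -- the dominating function
  set DD : ℝ → ℝ := fun x => L * 2 * (u x ^ 2 + C ^ 2 * β x ^ 2) with hDD_def
  have hDDint : Integrable DD n := (hu2.add (hβ2.const_mul (C ^ 2))).const_mul (L * 2)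
  -- key integrability and bounds for the g-integrands
  have hGkey : ∀ v : ℝ → ℝ, Measurable v → Integrable (fun x => v x ^ 2) n →
      (∀ᵐ x ∂n, |v x| ≤ M) → ∀ π : ℝ, |π| ≤ C →
      Integrable (fun x => g α (v x - π * β x)) n ∧
      (∀ᵐ x ∂n, g α (v x - π * β x) ≤ L * 2 * (v x ^ 2 + C ^ 2 * β x ^ 2)) := by
    intro v hv hv2 hvb π hπ
    have hmeas : AEStronglyMeasurable (fun x => g α (v x - π * β x)) n :=
      ((g_continuous α).measurable.comp (hv.sub (hβm.const_mul π))).aestronglyMeasurable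
    have hbd : ∀ᵐ x ∂n, g α (v x - π * β x) ≤ L * 2 * (v x ^ 2 + C ^ 2 * β x ^ 2) := by
      filter_upwards [hvb, hβb] with x h1 h2
      have hra : |v x - π * β x| ≤ R := by
        have h3 : |π * β x| ≤ C * Kβ := by
          rw [abs_mul]; exact mul_le_mul hπ h2 (abs_nonneg _) hCnn
        calc |v x - π * β x| ≤ |v x| + |π * β x| := abs_sub _ _
          _ ≤ M + C * Kβ := add_le_add h1 h3
      have h4 := g_quad hα hra
      have h5 : (v x - π * β x) ^ 2 ≤ 2 * (v x ^ 2 + C ^ 2 * β x ^ 2) := by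
        have h6 := abs_le.1 hπ
        have hπ2 : π ^ 2 ≤ C ^ 2 := by nlinarith
        nlinarith [sq_nonneg (v x + π * β x),
          mul_le_mul_of_nonneg_right hπ2 (sq_nonneg (β x))]
      calc g α (v x - π * β x) ≤ α * Real.exp (α * R) * (v x - π * β x) ^ 2 := h4
        _ ≤ L * 2 * (v x ^ 2 + C ^ 2 * β x ^ 2) := by rw [hL_def]; nlinarith
    refine ⟨Integrable.mono' ((hv2.add (hβ2.const_mul (C ^ 2))).const_mul (L * 2))
      hmeas ?_, hbd⟩
    filter_upwards [hbd] with x hx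
    rw [Real.norm_eq_abs, abs_of_nonneg (g_nonneg hα _)]
    simpa using hx
  -- error terms
  set Q : ℕ → ℝ := fun m => α / 2 * (2 * C * |σ| + |zs m + θ / α| + |z + θ / α|) * |zs m - z|
    with hQ_def
  set D : ℕ → ℝ := fun m =>
    L * ∫ x, (|us m x| + |u x| + 2 * C * |β x|) * |us m x - u x| ∂n with hD_def
  set T : ℕ → ℝ := fun m => ∫ x in {x : ℝ | 1/(m:ℝ) ≤ |x|}ᶜ, DD x ∂n with hT_def
  -- integrabilities for D
  have hqmeas : ∀ m, Measurable (fun x => |us m x| + |u x| + 2 * C * |β x|) := fun m =>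
    ((husm m).abs.add hum.abs).add (hβm.abs.const_mul (2 * C))
  have hq2 : ∀ m, Integrable
      (fun x => (|us m x| + |u x| + 2 * C * |β x|) ^ 2) n := by
    intro m
    apply Integrable.mono'
      (((hdm2 m).const_mul 6).add ((hu2.const_mul 9).add (hβ2.const_mul (12 * C ^ 2))))
      ((hqmeas m).pow_const 2).aestronglyMeasurable
    filter_upwards with x
    rw [Real.norm_eq_abs, abs_of_nonneg (sq_nonneg _)]
    simp only [Pi.add_apply]
    exact q_sq_le_ax C (us m x) (u x) (β x) hCnn
  have hqd : ∀ m, Integrable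
      (fun x => (|us m x| + |u x| + 2 * C * |β x|) * |us m x - u x|) n := by
    intro m
    apply Integrable.mono' (((hq2 m).add (hdm2 m)).const_mul (1/2))
      ((hqmeas m).mul ((husm m).sub hum).abs).aestronglyMeasurable
    filter_upwards with x
    rw [Real.norm_eq_abs]
    have h1 : (0:ℝ) ≤ |us m x| + |u x| + 2 * C * |β x| := by positivity
    simp only [Pi.mul_apply, Pi.sub_apply]
    rw [abs_of_nonneg (mul_nonneg h1 (abs_nonneg _))]
    simp only [Pi.add_apply]
    nlinarith [sq_nonneg (|us m x| + |u x| + 2 * C * |β x| - |us m x - u x|),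
      sq_abs (us m x - u x)]
  -- convergence of the error terms
  have hQ0 : Tendsto Q atTop (nhds 0) := by
    have hcont : Continuous (fun w : ℝ =>
        α / 2 * (2 * C * |σ| + |w + θ / α| + |z + θ / α|) * |w - z|) := by fun_prop
    have := (hcont.tendsto z).comp hz
    simpa [hQ_def, Function.comp_def] using this
  have hT0 : Tendsto T atTop (nhds 0) := tail_tendsto hn0 hDDint
  have hD0 : Tendsto D atTop (nhds 0) := by
    have hI0 : Tendsto (fun m =>
        ∫ x, (|us m x| + |u x| + 2 * C * |β x|) * |us m x - u x| ∂n) atTop (nhds 0) := by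
      have hIu : 0 ≤ ∫ x, u x ^ 2 ∂n := integral_nonneg fun x => sq_nonneg _
      have hIβ : 0 ≤ ∫ x, β x ^ 2 ∂n := integral_nonneg fun x => sq_nonneg _
      set S : ℝ := 6 + 9 * ∫ x, u x ^ 2 ∂n + 12 * C ^ 2 * ∫ x, β x ^ 2 ∂n with hS_def
      have hS : 0 < S := by positivity
      rw [tendsto_order]
      constructor
      · intro a ha
        filter_upwards with m
        exact lt_of_lt_of_le ha (integral_nonneg fun x =>
          mul_nonneg (by positivity) (abs_nonneg _))
      · intro ε hε
        set ε' : ℝ := ε / (2 * S) with hε'_def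
        have hε' : 0 < ε' := by positivity
        have hev := husu.eventually_lt_const
          (show (0:ℝ) < min 1 (ε * ε') by positivity)
        filter_upwards [hev] with m hm
        have hd1 : ∫ x, (us m x - u x) ^ 2 ∂n ≤ 1 := (hm.trans_le (min_le_left _ _)).le
        have hd2 : ∫ x, (us m x - u x) ^ 2 ∂n ≤ ε * ε' :=
          (hm.trans_le (min_le_right _ _)).le
        -- ∫ q² ≤ S
        have hi9 : Integrable (fun x => 9 * u x ^ 2 + 12 * C ^ 2 * β x ^ 2) n :=
          (hu2.const_mul 9).add (hβ2.const_mul (12 * C ^ 2))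
        have hi6 : Integrable (fun x => 6 * (us m x - u x) ^ 2) n := (hdm2 m).const_mul 6
        have hq2S : ∫ x, (|us m x| + |u x| + 2 * C * |β x|) ^ 2 ∂n ≤ S := by
          have hmono : ∫ x, (|us m x| + |u x| + 2 * C * |β x|) ^ 2 ∂n ≤
              ∫ x, (6 * (us m x - u x) ^ 2 + (9 * u x ^ 2 + 12 * C ^ 2 * β x ^ 2)) ∂n :=
            integral_mono (hq2 m) (hi6.add hi9)
              (fun x => q_sq_le_ax C (us m x) (u x) (β x) hCnn)
          have hval : ∫ x, (6 * (us m x - u x) ^ 2 + (9 * u x ^ 2 + 12 * C ^ 2 * β x ^ 2)) ∂n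
              = 6 * (∫ x, (us m x - u x) ^ 2 ∂n)
                + (9 * ∫ x, u x ^ 2 ∂n + 12 * C ^ 2 * ∫ x, β x ^ 2 ∂n) := by
            rw [integral_add hi6 hi9,
              integral_add (hu2.const_mul 9) (hβ2.const_mul (12 * C ^ 2)),
              integral_const_mul, integral_const_mul, integral_const_mul]
          rw [hval] at hmono
          rw [hS_def]
          nlinarith
        -- main bound
        have hmain : ∫ x, (|us m x| + |u x| + 2 * C * |β x|) * |us m x - u x| ∂n ≤
            ε' * ∫ x, (|us m x| + |u x| + 2 * C * |β x|) ^ 2 ∂n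
            + (1/(4*ε')) * ∫ x, (us m x - u x) ^ 2 ∂n := by
          have h0 : ∫ x, (ε' * (|us m x| + |u x| + 2 * C * |β x|) ^ 2
                + (1/(4*ε')) * (us m x - u x) ^ 2) ∂n
              = ε' * ∫ x, (|us m x| + |u x| + 2 * C * |β x|) ^ 2 ∂n
                + (1/(4*ε')) * ∫ x, (us m x - u x) ^ 2 ∂n := by
            rw [integral_add ((hq2 m).const_mul ε') ((hdm2 m).const_mul (1/(4*ε'))),
              integral_const_mul, integral_const_mul]
          rw [← h0]
          apply integral_mono (hqd m)
            (((hq2 m).const_mul ε').add ((hdm2 m).const_mul (1/(4*ε'))))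
          intro x
          have h1 := young_div (a := |us m x| + |u x| + 2 * C * |β x|)
            (b := |us m x - u x|) hε'
          rw [sq_abs] at h1
          exact h1
        have hfin : ε' * ∫ x, (|us m x| + |u x| + 2 * C * |β x|) ^ 2 ∂n
            + (1/(4*ε')) * ∫ x, (us m x - u x) ^ 2 ∂n < ε := by
          have h1 : ε' * ∫ x, (|us m x| + |u x| + 2 * C * |β x|) ^ 2 ∂n ≤ ε' * S :=
            mul_le_mul_of_nonneg_left hq2S hε'.le
          have h2 : ε' * S = ε / 2 := by
            rw [hε'_def]
            field_simp
          have h3 : (1/(4*ε')) * ∫ x, (us m x - u x) ^ 2 ∂n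
              ≤ (1/(4*ε')) * (ε * ε') :=
            mul_le_mul_of_nonneg_left hd2 (by positivity)
          have h4 : (1/(4*ε')) * (ε * ε') = ε / 4 := by
            field_simp
          nlinarith
        linarith [hmain, hfin]
    have := hI0.const_mul L
    simpa [hD_def] using this
  -- eventual bound and conclusion
  have habs : Tendsto (fun m => |zs m - z|) atTop (nhds 0) := by
    have h : Tendsto (fun m : ℕ => |zs m - z|) atTop (nhds |z - z|) :=
      (hz.sub tendsto_const_nhds).abs
    simpa using h
  have hev1 : ∀ᶠ m : ℕ in atTop, |zs m - z| ≤ 1 := by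
    filter_upwards [habs.eventually_lt_const zero_lt_one] with m hm using hm.le
  have hev2 : ∀ᶠ m : ℕ in atTop, (|z| + 1 : ℝ) ≤ (m : ℝ) := by
    filter_upwards [eventually_ge_atTop ⌈|z| + 1⌉₊] with m hm
    calc (|z| + 1 : ℝ) ≤ (⌈|z| + 1⌉₊ : ℝ) := Nat.le_ceil _
      _ ≤ (m : ℝ) := Nat.cast_le.2 hm
  have hev3 : ∀ᶠ m : ℕ in atTop, 1 ≤ m := eventually_ge_atTop 1
  have hbound : ∀ᶠ m : ℕ in atTop,
      ‖genT α θ σ β 𝒞 n ρ ρM m (zs m) (us m) - gen α θ σ β 𝒞 n z u‖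
        ≤ Q m + D m + T m + |θ| * |zs m - z| := by
    filter_upwards [hev1, hev2, hev3] with m hm1 hm2 hm3
    have hzm : |zs m| ≤ (m : ℝ) := by
      have h2 := abs_sub_abs_le_abs_sub (zs m) z
      linarith
    have hA : MeasurableSet {x : ℝ | 1/(m:ℝ) ≤ |x|} :=
      (isClosed_le continuous_const continuous_abs).measurableSet
    set A := {x : ℝ | 1/(m:ℝ) ≤ |x|} with hA_def
    set φ : ℝ → ℝ := fun π => α / 2 * (π * σ - (zs m + θ / α)) ^ 2 * ρ m (zs m)
      + ∫ x in A, g α (us m x - π * β x) * ρM (us m x) ∂n with hφ_def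
    set ψ : ℝ → ℝ := fun π => α / 2 * (π * σ - (z + θ / α)) ^ 2
      + ∫ x, g α (u x - π * β x) ∂n with hψ_def
    have hδ : ∀ π ∈ 𝒞, |φ π - ψ π| ≤ Q m + D m + T m := by
      intro π hπmem
      have hπ := hπC π hπmem
      obtain ⟨hGm_int, hGm_bd⟩ := hGkey (us m) (husm m) (hus2 m) (husb m) π hπ
      obtain ⟨hGu_int, hGu_bd⟩ := hGkey u hum hu2 hub π hπ
      have hρ1 : ρ m (zs m) = 1 := hρone m hm3 _ hzm
      have hIm : ∫ x in A, g α (us m x - π * β x) * ρM (us m x) ∂n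
          = ∫ x in A, g α (us m x - π * β x) ∂n := by
        apply integral_congr_ae
        filter_upwards [ae_restrict_of_ae (husb m)] with x hx
        rw [hρMone _ hx, mul_one]
      have hsplit : ∫ x, g α (u x - π * β x) ∂n
          = (∫ x in A, g α (u x - π * β x) ∂n) + ∫ x in Aᶜ, g α (u x - π * β x) ∂n :=
        (integral_add_compl hA hGu_int).symm
      have hφπ : φ π = α / 2 * (π * σ - (zs m + θ / α)) ^ 2
          + ∫ x in A, g α (us m x - π * β x) ∂n := by
        simp only [hφ_def]
        rw [hρ1, hIm, mul_one]
      have hquad : |α / 2 * (π * σ - (zs m + θ / α)) ^ 2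
          - α / 2 * (π * σ - (z + θ / α)) ^ 2| ≤ Q m := by
        have h1 : α / 2 * (π * σ - (zs m + θ / α)) ^ 2 - α / 2 * (π * σ - (z + θ / α)) ^ 2
            = α / 2 * ((2 * (π * σ) - (zs m + θ / α) - (z + θ / α)) * (z - zs m)) := by ring
        rw [h1, abs_mul, abs_of_pos (by positivity : (0:ℝ) < α / 2), abs_mul,
          abs_sub_comm z (zs m)]
        have e1 : |2 * (π * σ) - (zs m + θ / α) - (z + θ / α)|
            ≤ 2 * C * |σ| + |zs m + θ / α| + |z + θ / α| := by
          have t1 : |2 * (π * σ) - (zs m + θ / α) - (z + θ / α)|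
              ≤ |2 * (π * σ) - (zs m + θ / α)| + |z + θ / α| := abs_sub _ _
          have t2 : |2 * (π * σ) - (zs m + θ / α)| ≤ |2 * (π * σ)| + |zs m + θ / α| :=
            abs_sub _ _
          have t3 : |2 * (π * σ)| ≤ 2 * C * |σ| := by
            rw [abs_mul, abs_mul, abs_two]
            nlinarith [abs_nonneg σ, abs_nonneg π]
          linarith
        simp only [hQ_def]
        nlinarith [mul_le_mul_of_nonneg_left
          (mul_le_mul_of_nonneg_right e1 (abs_nonneg (zs m - z)))
          (le_of_lt (show (0:ℝ) < α / 2 by positivity))]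
      have hGdiff_int : Integrable
          (fun x => |g α (us m x - π * β x) - g α (u x - π * β x)|) n :=
        (hGm_int.sub hGu_int).abs
      have hptwise : ∀ᵐ x ∂n, |g α (us m x - π * β x) - g α (u x - π * β x)|
          ≤ L * ((|us m x| + |u x| + 2 * C * |β x|) * |us m x - u x|) := by
        filter_upwards [husb m, hub, hβb] with x h1 h2 h3
        have hπβ : |π * β x| ≤ C * Kβ := by
          rw [abs_mul]; exact mul_le_mul hπ h3 (abs_nonneg _) hCnn
        have hra : |us m x - π * β x| ≤ R := by
          calc |us m x - π * β x| ≤ |us m x| + |π * β x| := abs_sub _ _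
            _ ≤ M + C * Kβ := add_le_add h1 hπβ
        have hrb : |u x - π * β x| ≤ R := by
          calc |u x - π * β x| ≤ |u x| + |π * β x| := abs_sub _ _
            _ ≤ M + C * Kβ := add_le_add h2 hπβ
        have hd := g_diff hα hra hrb
        have he1 : (us m x - π * β x) - (u x - π * β x) = us m x - u x := by ring
        rw [he1] at hd
        refine hd.trans ?_
        have he2 : |us m x - π * β x| + |u x - π * β x|
            ≤ |us m x| + |u x| + 2 * C * |β x| := by
          have e3 : |us m x - π * β x| ≤ |us m x| + |π * β x| := abs_sub _ _
          have e4 : |u x - π * β x| ≤ |u x| + |π * β x| := abs_sub _ _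
          have e5 : |π * β x| ≤ C * |β x| := by
            rw [abs_mul]; exact mul_le_mul_of_nonneg_right hπ (abs_nonneg _)
          linarith
        have he3 := mul_le_mul_of_nonneg_right he2 (abs_nonneg (us m x - u x))
        have hLpos : (0:ℝ) < α * Real.exp (α * R) := by positivity
        calc α * Real.exp (α * R) * ((|us m x - π * β x| + |u x - π * β x|) * |us m x - u x|)
            ≤ α * Real.exp (α * R)
              * ((|us m x| + |u x| + 2 * C * |β x|) * |us m x - u x|) := by
              exact mul_le_mul_of_nonneg_left he3 hLpos.le
          _ = L * ((|us m x| + |u x| + 2 * C * |β x|) * |us m x - u x|) := by rw [hL_def]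
      have hDm : ∫ x, |g α (us m x - π * β x) - g α (u x - π * β x)| ∂n ≤ D m := by
        simp only [hD_def]
        have h4 := integral_mono_ae hGdiff_int ((hqd m).const_mul L) ?_
        · rwa [integral_const_mul] at h4
        · exact hptwise
      have hpieceA : |(∫ x in A, g α (us m x - π * β x) ∂n)
          - ∫ x in A, g α (u x - π * β x) ∂n|
          ≤ ∫ x, |g α (us m x - π * β x) - g α (u x - π * β x)| ∂n := by
        rw [← integral_sub hGm_int.restrict hGu_int.restrict]
        calc |∫ x in A, (g α (us m x - π * β x) - g α (u x - π * β x)) ∂n|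
            ≤ ∫ x in A, |g α (us m x - π * β x) - g α (u x - π * β x)| ∂n := by
              simpa [Real.norm_eq_abs] using norm_integral_le_integral_norm
                (μ := n.restrict A)
                (f := fun x => g α (us m x - π * β x) - g α (u x - π * β x))
          _ ≤ ∫ x, |g α (us m x - π * β x) - g α (u x - π * β x)| ∂n :=
              setIntegral_le_integral hGdiff_int (ae_of_all _ fun x => abs_nonneg _)
      have hpieceB : ∫ x in Aᶜ, g α (u x - π * β x) ∂n ≤ T m := by
        simp only [hT_def, hDD_def, ← hA_def]
        apply integral_mono_ae hGu_int.restrict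
          (((hu2.add (hβ2.const_mul (C ^ 2))).const_mul (L * 2)).restrict)
        exact ae_restrict_of_ae hGu_bd
      have hBnn : 0 ≤ ∫ x in Aᶜ, g α (u x - π * β x) ∂n :=
        integral_nonneg fun x => g_nonneg hα _
      have hkey : φ π - ψ π
          = (α / 2 * (π * σ - (zs m + θ / α)) ^ 2 - α / 2 * (π * σ - (z + θ / α)) ^ 2)
            + (((∫ x in A, g α (us m x - π * β x) ∂n)
                - ∫ x in A, g α (u x - π * β x) ∂n)
              - ∫ x in Aᶜ, g α (u x - π * β x) ∂n) := by
        rw [hφπ]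
        simp only [hψ_def]
        rw [hsplit]
        ring
      rw [hkey]
      have htri := abs_add_le
        (α / 2 * (π * σ - (zs m + θ / α)) ^ 2 - α / 2 * (π * σ - (z + θ / α)) ^ 2)
        (((∫ x in A, g α (us m x - π * β x) ∂n) - ∫ x in A, g α (u x - π * β x) ∂n)
          - ∫ x in Aᶜ, g α (u x - π * β x) ∂n)
      have htri2 := abs_sub
        ((∫ x in A, g α (us m x - π * β x) ∂n) - ∫ x in A, g α (u x - π * β x) ∂n)
        (∫ x in Aᶜ, g α (u x - π * β x) ∂n)
      rw [abs_of_nonneg hBnn] at htri2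
      have hDm' := hpieceA.trans hDm
      linarith [hpieceB]
    have hφ0 : ∀ p ∈ 𝒞, 0 ≤ φ p := by
      intro p hp
      simp only [hφ_def]
      apply add_nonneg
      · exact mul_nonneg (by positivity) (hρ01 m hm3 _).1
      · exact integral_nonneg fun x => mul_nonneg (g_nonneg hα _) (hρM01 _).1
    have hψ0 : ∀ p ∈ 𝒞, 0 ≤ ψ p := by
      intro p hp
      simp only [hψ_def]
      exact add_nonneg (by positivity) (integral_nonneg fun x => g_nonneg hα _)
    have hsinf := sInf_image_diff_le h𝒞ne hφ0 hψ0 hδ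
    have hgt : genT α θ σ β 𝒞 n ρ ρM m (zs m) (us m) - gen α θ σ β 𝒞 n z u
        = (sInf (φ '' 𝒞) - sInf (ψ '' 𝒞)) - θ * (zs m - z) := by
      simp only [genT, gen, ← hA_def, ← hφ_def, ← hψ_def]
      ring
    rw [Real.norm_eq_abs, hgt]
    have htri3 := abs_sub (sInf (φ '' 𝒞) - sInf (ψ '' 𝒞)) (θ * (zs m - z))
    rw [abs_mul] at htri3
    linarith
  rw [← tendsto_sub_nhds_zero_iff]
  apply squeeze_zero_norm' hbound
  have hlast : Tendsto (fun m => |θ| * |zs m - z|) atTop (nhds 0) := by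
    simpa using habs.const_mul |θ|
  simpa using ((hQ0.add hD0).add hT0).add hlast
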